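/- The union of any ⊆-chain of (M,N)-stable sets is (M,N)-stable. -/

import Mathlib

open Set Matroid
open scoped symmDiff

namespace AZ

variable {α : Type*}

/-- The contraction `M / X`, defined (in the standard way) as the dual of the
restriction of the dual to the complement of `X`. -/
def con (M : Matroid α) (X : Set α) : Matroid α := (M✶ ↾ (M.E \ X))✶

/-- The deletion `M − X := M ↾ (E ∖ X)`. -/
def del (M : Matroid α) (X : Set α) : Matroid α := M ↾ (M.E \ X)

/-- The matroidal Hall condition `Hall(M,N)`: for every `X ⊆ E` such that `M ↾ X` has a
base that is independent in `N.X = N/(E∖X)`, also `N.X` has a base independent in `M ↾ X`. -/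
def Hall (M N : Matroid α) : Prop :=
  ∀ X ⊆ N.E,
    (∃ B, (M ↾ X).IsBase B ∧ (con N (N.E \ X)).Indep B) →
    ∃ B, (con N (N.E \ X)).IsBase B ∧ (M ↾ X).Indep B

/-- `(M,N)` is finitely matchable: every finite `F ⊆ E` is `N`-spanned by an
`M`-independent set. -/
def FinitelyMatchable (M N : Matroid α) : Prop :=
  ∀ F ⊆ M.E, F.Finite → ∃ I, M.Indep I ∧ F ⊆ N.closure I

/-- `G ⊆ E` is `(M,N)`-negligible: for all finite `X ⊆ G` and finite `Y ⊆ E ∖ G` there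
is an `M/Y`-independent set that `N`-spans `X`. -/
def Negligible (M N : Matroid α) (G : Set α) : Prop :=
  G ⊆ M.E ∧
    ∀ X ⊆ G, X.Finite → ∀ Y ⊆ M.E \ G, Y.Finite →
      ∃ I, (con M Y).Indep I ∧ X ⊆ N.closure I

/-- A common independent set `I` of `M` and `N` is `(M,N)`-stable if every `J ⊆ E ∖ I`
that is independent in `M/I` and in `N` is also independent in `N/I`. -/
def Stable (M N : Matroid α) (I : Set α) : Prop :=
  M.Indep I ∧ N.Indep I ∧
    ∀ J ⊆ M.E \ I, (con M I).Indep J → N.Indep J → (con N I).Indep J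

/-- A circuit of a matroid: a minimal dependent subset of the ground set. -/
def Circuit (M : Matroid α) (C : Set α) : Prop :=
  C ⊆ M.E ∧ ¬ M.Indep C ∧ ∀ D ⊂ C, M.Indep D

/-- The arc relation of the exchange digraph `D(I)`: for `x ∈ E ∖ I` and `y ∈ I` there is
an arc `x → y` if `x ∈ span_M(I)` and `y` lies in the unique `M`-circuit contained in
`I + x`, and an arc `y → x` if `x ∈ span_N(I)` and `y` lies in the unique `N`-circuit
contained in `I + x`. -/
def Arc (M N : Matroid α) (I : Set α) (x y : α) : Prop :=
  (x ∈ M.E \ I ∧ y ∈ I ∧ x ∈ M.closure I ∧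
    ∃ C, Circuit M C ∧ C ⊆ insert x I ∧ x ∈ C ∧ y ∈ C) ∨
  (x ∈ I ∧ y ∈ M.E \ I ∧ y ∈ N.closure I ∧
    ∃ C, Circuit N C ∧ C ⊆ insert y I ∧ y ∈ C ∧ x ∈ C)

/-- `Reach M N I x` is `E(x,I)`: the set of elements reachable from `x` by a directed
path in `D(I)`. -/
def Reach (M N : Matroid α) (I : Set α) (x : α) : Set α :=
  {y | Relation.ReflTransGen (Arc M N I) x y}

/-- `P = {f 0, …, f (2n)}` is an `xy`-augmenting path for `I`: it starts at
`x = f 0 ∉ span_N(I)`, ends at `y = f (2n) ∉ span_M(I)`, consecutive elements are joined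
by arcs of `D(I)`, and there are no jumping arcs. -/
def IsAugPath (M N : Matroid α) (I P : Set α) (x y : α) : Prop :=
  ∃ (n : ℕ) (f : ℕ → α),
    P = f '' Set.Iic (2 * n) ∧ P ⊆ M.E ∧ Set.InjOn f (Set.Iic (2 * n)) ∧
    f 0 = x ∧ f (2 * n) = y ∧
    x ∉ N.closure I ∧ y ∉ M.closure I ∧
    (∀ i < 2 * n, Arc M N I (f i) (f (i + 1))) ∧
    (∀ i j, i + 1 < j → j ≤ 2 * n → ¬ Arc M N I (f i) (f j))

/-- One augmentation step: `J = I △ P` for some augmenting path `P` for `I`. -/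
def AugStep (M N : Matroid α) (I J : Set α) : Prop :=
  ∃ P x y, IsAugPath M N I P x y ∧ J = I ∆ P

/-- `J ∈ A(I)`: `J` is obtained from `I` by finitely many successive augmentations. -/
def MemA (M N : Matroid α) (I J : Set α) : Prop :=
  Relation.ReflTransGen (AugStep M N) I J

/-- `O = {f 0, …, f (2n+1)}` is a switching cycle for `I`: the arcs of `D(I)` inside `O`
are exactly the arcs `f i → f (i+1 mod 2n+2)`, forming a chordless directed cycle. -/
def SwitchCycle (M N : Matroid α) (I O : Set α) : Prop :=
  ∃ (n : ℕ) (f : ℕ → α),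
    O = f '' Set.Iio (2 * n + 2) ∧ O ⊆ M.E ∧ Set.InjOn f (Set.Iio (2 * n + 2)) ∧
    ∀ i < 2 * n + 2, ∀ j < 2 * n + 2,
      (Arc M N I (f i) (f j) ↔ j = (i + 1) % (2 * n + 2))

/-- The preorder on finite common independent sets: `I ⊴ J` iff
`I ⊆ span_M(J) ∩ span_N(J)`. -/
def Le (M N : Matroid α) (I J : Set α) : Prop :=
  I ⊆ M.closure J ∩ N.closure J

/-- The equivalence relation: `I ∼ J` iff `I ⊴ J` and `J ⊴ I`. -/
def Sim (M N : Matroid α) (I J : Set α) : Prop :=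
  Le M N I J ∧ Le M N J I

/-- A family of finite common independent sets of `M` and `N` that is closed under `∼`
and is `⊴`-directed. -/
def DirFam (M N : Matroid α) (D : Set (Set α)) : Prop :=
  (∀ I ∈ D, I.Finite ∧ M.Indep I ∧ N.Indep I) ∧
  (∀ I ∈ D, ∀ J, J.Finite → M.Indep J → N.Indep J → Sim M N I J → J ∈ D) ∧
  (∀ I ∈ D, ∀ J ∈ D, ∃ K ∈ D, Le M N I K ∧ Le M N J K)

/-- A maximal directed family of finite common independent sets. -/
def MaxDirFam (M N : Matroid α) (D : Set (Set α)) : Prop :=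
  DirFam M N D ∧ ∀ D', DirFam M N D' → D ⊆ D' → D' = D

lemma con_indep_iff {M : Matroid α} {C J : Set α} (hC : M.Indep C) :
    (con M C).Indep J ↔ Disjoint J C ∧ M.Indep (J ∪ C) := by
  have hCE : C ⊆ M.E := hC.subset_ground
  have hXE : M.E \ C ⊆ M✶.E := by rw [dual_ground]; exact diff_subset
  rw [con, dual_indep_iff_exists', restrict_ground_eq]
  constructor
  · rintro ⟨hJ, B, hB, hJB⟩
    rw [isBase_restrict_iff hXE] at hB
    obtain ⟨BM, hBM, hCBM⟩ := hC.exists_isBase_superset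
    have hBbase : M✶.IsBase B :=
      hBM.compl_isBase_dual.isBase_of_isBasis_superset (diff_subset_diff_right hCBM) hB
    have hD : M.IsBase (M.E \ B) := hBbase.compl_isBase_of_dual
    refine ⟨(subset_diff.mp hJ).2, hD.indep.subset (union_subset ?_ ?_)⟩
    · exact subset_diff.mpr ⟨(subset_diff.mp hJ).1, hJB⟩
    · exact subset_diff.mpr ⟨hCE, (subset_diff.mp hB.subset).2.symm⟩
  · rintro ⟨hJC, hind⟩
    obtain ⟨BM, hBM, hBMsub⟩ := hind.exists_isBase_superset
    have hBdual := hBM.compl_isBase_dual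
    have hBsub : M.E \ BM ⊆ M.E \ C :=
      diff_subset_diff_right (subset_union_right.trans hBMsub)
    have hBasis : M✶.IsBasis (M.E \ BM) (M.E \ C) := by
      rw [isBasis_iff hXE]
      refine ⟨hBdual.indep, hBsub, fun J' hJ' hBJ' hJ'X ↦ hBdual.eq_of_subset_indep hJ' hBJ'⟩
    refine ⟨subset_diff.mpr ⟨(subset_union_left.trans hind.subset_ground), hJC⟩,
      M.E \ BM, (isBase_restrict_iff hXE).mpr hBasis, ?_⟩
    exact (disjoint_sdiff_right (s := BM) (t := M.E)).mono_left (subset_union_left.trans hBMsub)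

lemma chain_finite_subset {C : Set (Set α)} (hC : IsChain (· ⊆ ·) C) {F : Set α}
    (hF : F.Finite) (hFU : F ⊆ ⋃₀ C) : F = ∅ ∨ ∃ I ∈ C, F ⊆ I := by
  refine Set.Finite.induction_on
    (motive := fun F _ => F ⊆ ⋃₀ C → (F = ∅ ∨ ∃ I ∈ C, F ⊆ I)) F hF (fun _ => Or.inl rfl) ?_ hFU
  intro a F haF hFfin ih hFU'
  obtain ⟨I, hI, haI⟩ := hFU' (mem_insert a F)
  rcases ih ((subset_insert a F).trans hFU') with rfl | ⟨I', hI', hFI'⟩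
  · exact Or.inr ⟨I, hI, by simpa⟩
  · rcases eq_or_ne I I' with rfl | hne
    · exact Or.inr ⟨I, hI, insert_subset haI hFI'⟩
    rcases hC hI hI' hne with h | h
    · exact Or.inr ⟨I', hI', insert_subset (h haI) hFI'⟩
    · exact Or.inr ⟨I, hI, insert_subset haI (hFI'.trans h)⟩


/-- The union of a `⊆`-chain of `(M,N)`-stable sets is `(M,N)`-stable. -/
theorem statement6 (M N : Matroid α) [M.Finitary] [N.Finitary] (hE : M.E = N.E)
    (C : Set (Set α)) (hC : IsChain (· ⊆ ·) C)
    (h : ∀ I ∈ C, Stable M N I) : Stable M N (⋃₀ C) := by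
  have hMU : M.Indep (⋃₀ C) := by
    refine indep_of_forall_finite_subset_indep _ fun F hFU hFfin => ?_
    rcases chain_finite_subset hC hFfin hFU with rfl | ⟨I, hI, hFI⟩
    · exact M.empty_indep
    · exact (h I hI).1.subset hFI
  have hNU : N.Indep (⋃₀ C) := by
    refine indep_of_forall_finite_subset_indep _ fun F hFU hFfin => ?_
    rcases chain_finite_subset hC hFfin hFU with rfl | ⟨I, hI, hFI⟩
    · exact N.empty_indep
    · exact (h I hI).2.1.subset hFI
  refine ⟨hMU, hNU, ?_⟩
  intro J hJE hJM hJN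
  rw [con_indep_iff hMU] at hJM
  obtain ⟨hJU, hJMU⟩ := hJM
  rw [con_indep_iff hNU]
  refine ⟨hJU, indep_of_forall_finite_subset_indep _ fun F hF hFfin => ?_⟩
  rcases chain_finite_subset hC (hFfin.inter_of_left _) (inter_subset_right) with hemp | ⟨I, hI, hFI⟩
  · refine hJN.subset fun x hx => ?_
    rcases hF hx with hxJ | hxU
    · exact hxJ
    · exact absurd (eq_empty_iff_forall_notMem.mp hemp x) (by simp [hx, hxU])
  · obtain ⟨hMI, hNI, hstab⟩ := h I hI
    have hIU : I ⊆ ⋃₀ C := subset_sUnion_of_mem hI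
    have hJdisI : Disjoint J I := hJU.mono_right hIU
    have hJI : (con M I).Indep J := (con_indep_iff hMI).mpr
      ⟨hJdisI, hJMU.subset (union_subset_union_right J hIU)⟩
    have hJEI : J ⊆ M.E \ I := subset_diff.mpr ⟨(subset_diff.mp hJE).1, hJdisI⟩
    have hres := hstab J hJEI hJI hJN
    rw [con_indep_iff hNI] at hres
    refine hres.2.subset fun x hx => ?_
    rcases hF hx with hxJ | hxU
    · exact Or.inl hxJ
    · exact Or.inr (hFI ⟨hx, hxU⟩)

end AZ
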